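/- Let F : ℝ^p → ℝ be differentiable, μ-strongly convex and L-smooth (with 0 < μ ≤ L), and let x* be its unique minimizer. Then for every step-size α with 0 < α ≤ 1/L and every x ∈ ℝ^p, ‖x − α∇F(x) − x*‖ ≤ (1 − μα)‖x − x*‖. -/

import Mathlib

open RealInnerProductSpace

section GradAux

variable {p : ℕ}

local notation "E" => EuclideanSpace ℝ (Fin p)

private lemma line_hasDerivAt (F : E → ℝ) (hdiff : Differentiable ℝ F) (a v : E) (t : ℝ) :
    HasDerivAt (fun s : ℝ => F (a + s • v)) ⟪gradient F (a + t • v), v⟫ t := by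
  have hline : HasDerivAt (fun s : ℝ => a + s • v) v t := by
    simpa using ((hasDerivAt_id t).smul_const v).const_add a
  have hF : HasFDerivAt F (InnerProductSpace.toDual ℝ _ (gradient F (a + t • v))) (a + t • v) :=
    hasGradientAt_iff_hasFDerivAt.mp (hdiff _).hasGradientAt
  have key := hF.comp_hasDerivAt t hline
  rw [InnerProductSpace.toDual_apply_apply] at key
  exact key

private lemma descent_lemma (F : E → ℝ) (L : ℝ) (hdiff : Differentiable ℝ F)
    (hsmooth : ∀ x y : E, ‖gradient F x - gradient F y‖ ≤ L * ‖x - y‖)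
    (a b : E) :
    F b ≤ F a + ⟪gradient F a, b - a⟫ + L / 2 * ‖b - a‖ ^ 2 := by
  set v := b - a with hv
  set g := gradient F a with hg
  set h : ℝ → ℝ := fun t => F a + t * ⟪g, v⟫ + L * t ^ 2 / 2 * ‖v‖ ^ 2 - F (a + t • v) with hh
  have hder : ∀ t : ℝ, HasDerivAt h
      (⟪g, v⟫ + L * t * ‖v‖ ^ 2 - ⟪gradient F (a + t • v), v⟫) t := by
    intro t
    have h1 : HasDerivAt (fun t : ℝ => F a + t * ⟪g, v⟫ + L * t ^ 2 / 2 * ‖v‖ ^ 2)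
        (⟪g, v⟫ + L * t * ‖v‖ ^ 2) t := by
      have : HasDerivAt (fun t : ℝ => F a + t * ⟪g, v⟫ + L * t ^ 2 / 2 * ‖v‖ ^ 2)
          (0 + 1 * ⟪g, v⟫ + L * (2 * t ^ 1) / 2 * ‖v‖ ^ 2) t := by
        exact (((hasDerivAt_const t (F a)).add ((hasDerivAt_id t).mul_const _)).add
          ((((hasDerivAt_pow 2 t).const_mul L).div_const 2).mul_const _))
      convert this using 1; ring
    exact h1.sub (line_hasDerivAt F hdiff a v t)
  have hmono : MonotoneOn h (Set.Icc 0 1) := by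
    apply monotoneOn_of_deriv_nonneg (convex_Icc 0 1)
    · exact Continuous.continuousOn (continuous_iff_continuousAt.2 fun t => (hder t).continuousAt)
    · intro t ht
      exact (hder t).differentiableAt.differentiableWithinAt
    · intro t ht
      rw [(hder t).deriv]
      rw [interior_Icc] at ht
      have hb : ⟪gradient F (a + t • v) - g, v⟫ ≤ L * t * ‖v‖ ^ 2 := by
        calc ⟪gradient F (a + t • v) - g, v⟫ ≤ ‖gradient F (a + t • v) - g‖ * ‖v‖ :=
              real_inner_le_norm _ _
          _ ≤ (L * ‖(a + t • v) - a‖) * ‖v‖ := by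
              have := hsmooth (a + t • v) a
              nlinarith [norm_nonneg v]
          _ = L * t * ‖v‖ ^ 2 := by
              have : ‖(a + t • v) - a‖ = t * ‖v‖ := by
                simp [norm_smul, abs_of_pos ht.1]
              rw [this]; ring
      rw [inner_sub_left] at hb
      linarith
  have h01 : h 0 ≤ h 1 := hmono (by norm_num) (by norm_num) (by norm_num)
  have h0 : h 0 = 0 := by simp [hh]
  have h1 : h 1 = F a + ⟪g, v⟫ + L / 2 * ‖v‖ ^ 2 - F b := by
    simp [hh, hv]
  rw [h0, h1] at h01
  linarith

private lemma key_lemma (F : E → ℝ) (μ L : ℝ) (hμL : μ < L)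
    (hsc : ∀ x y : E, F x + ⟪gradient F x, y - x⟫ + μ / 2 * ‖x - y‖ ^ 2 ≤ F y)
    (hDL : ∀ a b : E, F b ≤ F a + ⟪gradient F a, b - a⟫ + L / 2 * ‖b - a‖ ^ 2)
    (a b : E) :
    F a + ⟪gradient F a, b - a⟫ + μ / 2 * ‖b - a‖ ^ 2
      + 1 / (2 * (L - μ)) * ‖gradient F b - gradient F a - μ • (b - a)‖ ^ 2 ≤ F b := by
  have hM0 : 0 < L - μ := by linarith
  have hMne : L - μ ≠ 0 := ne_of_gt hM0
  set m : ℝ := (L - μ)⁻¹ with hm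
  set ga := gradient F a
  set gb := gradient F b
  set e : E := b - a with he
  set u : E := gb - ga - μ • e with hu
  set z : E := b - m • u with hz
  have hA := hsc a z
  have hB := hDL b z
  have hza : z - a = e - m • u := by rw [hz, he]; abel
  have hzb : z - b = -(m • u) := by rw [hz]; abel
  have naz : ‖a - z‖ ^ 2 = ‖e‖ ^ 2 - 2 * (m * ⟪e, u⟫) + m ^ 2 * ‖u‖ ^ 2 := by
    rw [norm_sub_rev, hza, norm_sub_sq_real, real_inner_smul_right, norm_smul,
      Real.norm_eq_abs, mul_pow, sq_abs]
  have nzb : ‖z - b‖ ^ 2 = m ^ 2 * ‖u‖ ^ 2 := by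
    rw [hzb, norm_neg, norm_smul, Real.norm_eq_abs, mul_pow, sq_abs]
  have iaz : ⟪ga, z - a⟫ = ⟪ga, e⟫ - m * ⟪ga, u⟫ := by
    rw [hza, inner_sub_right, real_inner_smul_right]
  have ibz : ⟪gb, z - b⟫ = -(m * ⟪gb, u⟫) := by
    rw [hzb, inner_neg_right, real_inner_smul_right]
  have huu : ‖u‖ ^ 2 = ⟪gb, u⟫ - ⟪ga, u⟫ - μ * ⟪e, u⟫ := by
    conv_lhs => rw [← real_inner_self_eq_norm_sq, hu]
    rw [inner_sub_left, inner_sub_left, real_inner_smul_left]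
  rw [iaz, naz] at hA
  rw [ibz, nzb] at hB
  have hC := hA.trans hB
  have huu' : m * ‖u‖ ^ 2 = m * ⟪gb, u⟫ - m * ⟪ga, u⟫ - μ * (m * ⟪e, u⟫) := by
    rw [huu]; ring
  have hMm : (L - μ) * m = 1 := mul_inv_cancel₀ hMne
  have h2 : L / 2 * (m ^ 2 * ‖u‖ ^ 2) - μ / 2 * (m ^ 2 * ‖u‖ ^ 2) = m / 2 * ‖u‖ ^ 2 := by
    have h3 : L / 2 * (m ^ 2 * ‖u‖ ^ 2) - μ / 2 * (m ^ 2 * ‖u‖ ^ 2)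
        = ((L - μ) * m) * (m * ‖u‖ ^ 2) / 2 := by ring
    rw [h3, hMm]; ring
  have hgoal : 1 / (2 * (L - μ)) * ‖u‖ ^ 2 = m / 2 * ‖u‖ ^ 2 := by
    rw [hm]; field_simp
  rw [hgoal]
  linarith [hC, huu', h2]

private lemma coco_lemma (F : E → ℝ) (μ L : ℝ) (hμ : 0 < μ) (hμL : μ ≤ L)
    (hsc : ∀ x y : E, F x + ⟪gradient F x, y - x⟫ + μ / 2 * ‖x - y‖ ^ 2 ≤ F y)
    (hsmooth : ∀ x y : E, ‖gradient F x - gradient F y‖ ≤ L * ‖x - y‖)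
    (hkey : μ < L → ∀ a b : E,
      F a + ⟪gradient F a, b - a⟫ + μ / 2 * ‖b - a‖ ^ 2
        + 1 / (2 * (L - μ)) * ‖gradient F b - gradient F a - μ • (b - a)‖ ^ 2 ≤ F b)
    (a b : E) :
    0 ≤ ⟪gradient F b - gradient F a - μ • (b - a), b - a⟫ ∧
      ‖gradient F b - gradient F a - μ • (b - a)‖ ^ 2
        ≤ (L - μ) * ⟪gradient F b - gradient F a - μ • (b - a), b - a⟫ := by
  set ga := gradient F a
  set gb := gradient F b
  set e : E := b - a with he
  set u : E := gb - ga - μ • e with hu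
  have hue : ⟪u, e⟫ = ⟪gb, e⟫ - ⟪ga, e⟫ - μ * ‖e‖ ^ 2 := by
    rw [hu, inner_sub_left, inner_sub_left, real_inner_smul_left, real_inner_self_eq_norm_sq]
  have hab : a - b = -e := by rw [he]; abel
  have hiba : ⟪gb, a - b⟫ = -⟪gb, e⟫ := by rw [hab, inner_neg_right]
  have hnab : ‖a - b‖ = ‖e‖ := by rw [hab, norm_neg]
  have h1 := hsc a b
  have h2 := hsc b a
  rw [norm_sub_rev a b] at h1
  rw [hiba] at h2
  have hmono : μ * ‖e‖ ^ 2 ≤ ⟪gb, e⟫ - ⟪ga, e⟫ := by linarith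
  have hue0 : 0 ≤ ⟪u, e⟫ := by rw [hue]; linarith
  refine ⟨hue0, ?_⟩
  rcases eq_or_lt_of_le hμL with hEq | hLt
  · subst hEq
    have hsm := hsmooth b a
    have hnn : ‖u‖ ^ 2 = ‖gb - ga‖ ^ 2 - 2 * μ * ⟪gb - ga, e⟫ + μ ^ 2 * ‖e‖ ^ 2 := by
      rw [hu, norm_sub_sq_real, real_inner_smul_right, norm_smul, Real.norm_eq_abs,
        mul_pow, sq_abs]
      ring
    have hie : ⟪gb - ga, e⟫ = ⟪gb, e⟫ - ⟪ga, e⟫ := inner_sub_left _ _ _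
    nlinarith [sq_nonneg ‖u‖, norm_nonneg (gb - ga), norm_nonneg e, hμ.le]
  · have k1 := hkey hLt a b
    have k2 := hkey hLt b a
    have hflip : gradient F a - gradient F b - μ • (a - b) = -u := by
      rw [hu, he, hab, smul_neg]
      abel
    rw [hflip, norm_neg] at k2
    rw [hiba, hnab] at k2
    have hM0 : 0 < L - μ := by linarith
    have hfrac : 1 / (2 * (L - μ)) * ‖u‖ ^ 2 + 1 / (2 * (L - μ)) * ‖u‖ ^ 2
        = (L - μ)⁻¹ * ‖u‖ ^ 2 := by
      field_simp; ring
    have hineq : (L - μ)⁻¹ * ‖u‖ ^ 2 ≤ ⟪u, e⟫ := by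
      rw [hue]; linarith [k1, k2, hfrac]
    have := mul_le_mul_of_nonneg_left hineq hM0.le
    rwa [← mul_assoc, mul_inv_cancel₀ (ne_of_gt hM0), one_mul] at this

end GradAux

/-- For a differentiable, `μ`-strongly convex and `L`-smooth
function `F` (with `0 < μ ≤ L`) with unique minimizer `xstar`, a gradient step
with step-size `0 < α ≤ 1/L` is a `(1 - μα)`-contraction towards `xstar`. -/
theorem gradient_step_contraction {p : ℕ} (F : EuclideanSpace ℝ (Fin p) → ℝ) (μ L : ℝ)
    (hμ : 0 < μ) (hμL : μ ≤ L)
    (hdiff : Differentiable ℝ F)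
    (hsc : ∀ x y : EuclideanSpace ℝ (Fin p),
      F x + ⟪gradient F x, y - x⟫ + μ / 2 * ‖x - y‖ ^ 2 ≤ F y)
    (hsmooth : ∀ x y : EuclideanSpace ℝ (Fin p),
      ‖gradient F x - gradient F y‖ ≤ L * ‖x - y‖)
    (xstar : EuclideanSpace ℝ (Fin p))
    (hmin : ∀ y, F xstar ≤ F y)
    (huniq : ∀ z : EuclideanSpace ℝ (Fin p), (∀ y, F z ≤ F y) → z = xstar)
    (α : ℝ) (hα0 : 0 < α) (hα : α ≤ 1 / L)
    (x : EuclideanSpace ℝ (Fin p)) :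
    ‖x - α • gradient F x - xstar‖ ≤ (1 - μ * α) * ‖x - xstar‖ := by
  have hL : 0 < L := lt_of_lt_of_le hμ hμL
  -- gradient vanishes at the minimizer
  have grad0 : gradient F xstar = 0 := by
    have hloc : IsLocalMin F xstar := Filter.Eventually.of_forall hmin
    have hfd : fderiv ℝ F xstar = 0 := hloc.fderiv_eq_zero
    show (InnerProductSpace.toDual ℝ _).symm (fderiv ℝ F xstar) = 0
    rw [hfd, map_zero]
  -- cocoercivity-type inequality
  obtain ⟨hud, hcoco⟩ := coco_lemma F μ L hμ hμL hsc hsmooth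
    (fun hLt => key_lemma F μ L hLt hsc (descent_lemma F L hdiff hsmooth)) xstar x
  rw [grad0, sub_zero] at hud hcoco
  set d : EuclideanSpace ℝ (Fin p) := x - xstar with hd
  set g := gradient F x with hg
  set u : EuclideanSpace ℝ (Fin p) := g - μ • d with hu
  -- rewrite the step vector
  have hw : x - α • g - xstar = (1 - μ * α) • d - α • u := by
    rw [hu, hd]
    module
  rw [hw]
  -- bounds on stepsize
  have hαL : α * L ≤ 1 := by
    rw [le_div_iff₀ hL] at hα; linarith
  have hαμ : α * μ ≤ 1 := by nlinarith
  have h1μα : 0 ≤ 1 - μ * α := by linarith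
  -- expand the squared norm
  have hsq : ‖(1 - μ * α) • d - α • u‖ ^ 2
      = (1 - μ * α) ^ 2 * ‖d‖ ^ 2 - 2 * ((1 - μ * α) * α * ⟪u, d⟫) + α ^ 2 * ‖u‖ ^ 2 := by
    rw [norm_sub_sq_real, real_inner_smul_left, real_inner_smul_right, norm_smul, norm_smul,
      Real.norm_eq_abs, Real.norm_eq_abs, abs_of_nonneg h1μα, abs_of_pos hα0, mul_pow, mul_pow,
      real_inner_comm d u]
    ring
  have hsqle : ‖(1 - μ * α) • d - α • u‖ ^ 2 ≤ ((1 - μ * α) * ‖d‖) ^ 2 := by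
    rw [hsq]
    have h5 : α ^ 2 * ‖u‖ ^ 2 ≤ α ^ 2 * ((L - μ) * ⟪u, d⟫) :=
      mul_le_mul_of_nonneg_left hcoco (sq_nonneg α)
    have h6 : 0 ≤ α * (2 - α * μ - α * L) := by nlinarith
    have h7 : α ^ 2 * ((L - μ) * ⟪u, d⟫) ≤ 2 * ((1 - μ * α) * α * ⟪u, d⟫) := by
      linarith [mul_nonneg h6 hud]
    linarith [h5, h7]
  have hdn : 0 ≤ (1 - μ * α) * ‖d‖ := mul_nonneg h1μα (norm_nonneg d)
  exact (pow_le_pow_iff_left₀ (norm_nonneg _) hdn two_ne_zero).mp hsqle
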